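/- For monic polynomials orthogonal with respect to e^{-x^2} on (a,b) with subleading coefficient p_1(n,a,b), one has ∂_b p_1(n,a,b) = −e^{-b^2} P_n(b,a,b) P_{n-1}(b,a,b) / h_{n-1}(a,b) and ∂_a p_1(n,a,b) = e^{-a^2} P_n(a,a,b) P_{n-1}(a,a,b) / h_{n-1}(a,b). -/

import Mathlib

open MeasureTheory

private lemma gpoly_integrableOn (q : Polynomial ℝ) (a b : ℝ) :
    IntegrableOn (fun x => q.eval x * Real.exp (-x ^ 2)) (Set.Ioo a b) volume := by
  have hc : Continuous fun x : ℝ => q.eval x * Real.exp (-x ^ 2) :=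
    (q.continuous_aeval.mul ((Real.continuous_exp.comp (continuous_pow 2).neg)))
  exact (hc.integrableOn_Ioc).mono_set Set.Ioo_subset_Ioc_self

private lemma gpoly_cont (q : Polynomial ℝ) :
    Continuous fun x : ℝ => q.eval x * Real.exp (-x ^ 2) :=
  (q.continuous_aeval.mul ((Real.continuous_exp.comp (continuous_pow 2).neg)))

/-- Integral of a polynomial against the Gaussian weight as a finite sum of moments. -/
private lemma integral_poly_mul_exp (q : Polynomial ℝ) (a b : ℝ) (N : ℕ)
    (h : q.natDegree < N) :
    ∫ x in Set.Ioo a b, q.eval x * Real.exp (-x ^ 2)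
      = ∑ k ∈ Finset.range N, q.coeff k * ∫ x in Set.Ioo a b, x ^ k * Real.exp (-x ^ 2) := by
  have key : ∀ x : ℝ, q.eval x * Real.exp (-x ^ 2)
      = ∑ k ∈ Finset.range N, q.coeff k * (x ^ k * Real.exp (-x ^ 2)) := by
    intro x
    rw [Polynomial.eval_eq_sum_range' h, Finset.sum_mul]
    exact Finset.sum_congr rfl fun k _ => by ring
  simp_rw [key]
  rw [integral_finset_sum]
  · exact Finset.sum_congr rfl fun k _ => by rw [integral_const_mul]
  · intro k _
    exact ((gpoly_integrableOn (Polynomial.X ^ k) a b).congr_fun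
      (fun x _ => by simp) measurableSet_Ioo).const_mul _

/-- A monic orthogonal family annihilates lower-degree polynomials. -/
private lemma orth_lower (a b : ℝ) (Q : ℕ → Polynomial ℝ)
    (hmonic : ∀ m, (Q m).Monic) (hdeg : ∀ m, (Q m).natDegree = m)
    (horth : ∀ i j, i ≠ j →
      ∫ x in Set.Ioo a b, (Q i).eval x * (Q j).eval x * Real.exp (-x ^ 2) = 0) :
    ∀ (N : ℕ) (q : Polynomial ℝ), q.degree < (N : ℕ) →
      ∫ x in Set.Ioo a b, (Q N).eval x * q.eval x * Real.exp (-x ^ 2) = 0 := by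
  suffices H : ∀ (D N : ℕ) (q : Polynomial ℝ), q.natDegree ≤ D → q.degree < (N : ℕ) →
      ∫ x in Set.Ioo a b, (Q N).eval x * q.eval x * Real.exp (-x ^ 2) = 0 by
    intro N q hq; exact H q.natDegree N q le_rfl hq
  intro D
  induction D with
  | zero =>
    intro N q hq hdq
    rcases eq_or_ne q 0 with rfl | hq0
    · simp
    · have hqc : q = Polynomial.C (q.coeff 0) := Polynomial.eq_C_of_natDegree_le_zero hq
      have hN : N ≠ 0 := by
        intro h; subst h
        rw [Polynomial.degree_eq_natDegree hq0] at hdq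
        exact absurd hdq (by simp)
      have hQ0 : Q 0 = 1 := (hmonic 0).natDegree_eq_zero.mp (hdeg 0)
      have key : ∀ x : ℝ, (Q N).eval x * q.eval x * Real.exp (-x ^ 2)
          = q.coeff 0 * ((Q N).eval x * (Q 0).eval x * Real.exp (-x ^ 2)) := by
        intro x; rw [hQ0]; nth_rewrite 1 [hqc]; simp; ring
      simp_rw [key]
      rw [integral_const_mul, horth N 0 hN, mul_zero]
  | succ D ih =>
    intro N q hq hdq
    rcases le_or_gt q.natDegree D with h | h
    · exact ih N q h hdq
    have hqdeg : q.natDegree = D + 1 := le_antisymm hq h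
    have hq0 : q ≠ 0 := by intro h0; rw [h0] at hqdeg; simp at hqdeg
    set c := q.coeff (D + 1) with hc
    set r := q - Polynomial.C c * Q (D + 1) with hr
    have hrdeg : r.degree < ((D + 1 : ℕ) : WithBot ℕ) := by
      rw [Polynomial.degree_lt_iff_coeff_zero]
      intro j hj
      rcases eq_or_lt_of_le hj with rfl | hj'
      · have h1 : (Q (D + 1)).coeff (D + 1) = 1 := by
          have := (hmonic (D + 1)).coeff_natDegree
          rwa [hdeg (D + 1)] at this
        simp [hr, h1, hc]
      · have hj'' : (D + 1 : ℕ) < j := by exact_mod_cast hj'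
        have h1 : q.coeff j = 0 :=
          Polynomial.coeff_eq_zero_of_natDegree_lt (by omega)
        have h2 : (Q (D + 1)).coeff j = 0 :=
          Polynomial.coeff_eq_zero_of_natDegree_lt (by rw [hdeg]; omega)
        simp [hr, h1, h2]
    have hrnat : r.natDegree ≤ D := by
      rcases eq_or_ne r 0 with h0 | h0
      · simp [h0]
      · have := (Polynomial.natDegree_lt_iff_degree_lt h0).mpr hrdeg
        omega
    have hDN : ((D + 1 : ℕ) : WithBot ℕ) < (N : ℕ) := by
      rwa [Polynomial.degree_eq_natDegree hq0, hqdeg] at hdq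
    have hDN' : D + 1 < N := by exact_mod_cast hDN
    have hrdN : r.degree < (N : ℕ) := lt_trans hrdeg hDN
    have hqeq : q = r + Polynomial.C c * Q (D + 1) := by rw [hr]; ring
    have key : ∀ x : ℝ, (Q N).eval x * q.eval x * Real.exp (-x ^ 2)
        = (Q N).eval x * r.eval x * Real.exp (-x ^ 2)
          + c * ((Q N).eval x * (Q (D + 1)).eval x * Real.exp (-x ^ 2)) := by
      intro x; nth_rewrite 1 [hqeq]; simp; ring
    simp_rw [key]
    have int1 : IntegrableOn (fun x => (Q N).eval x * r.eval x * Real.exp (-x ^ 2))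
        (Set.Ioo a b) volume :=
      (gpoly_integrableOn (Q N * r) a b).congr_fun (fun x _ => by simp) measurableSet_Ioo
    have int2 : IntegrableOn
        (fun x => c * ((Q N).eval x * (Q (D + 1)).eval x * Real.exp (-x ^ 2)))
        (Set.Ioo a b) volume :=
      ((gpoly_integrableOn (Q N * Q (D + 1)) a b).congr_fun (fun x _ => by simp)
        measurableSet_Ioo).const_mul _
    rw [integral_add int1 int2, ih N r hrnat hrdN, integral_const_mul,
      horth N (D + 1) (by omega), mul_zero, zero_add]

/-- Projection onto `Q m`. -/
private lemma orth_proj (a b : ℝ) (Q : ℕ → Polynomial ℝ)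
    (hmonic : ∀ m, (Q m).Monic) (hdeg : ∀ m, (Q m).natDegree = m)
    (horth : ∀ i j, i ≠ j →
      ∫ x in Set.Ioo a b, (Q i).eval x * (Q j).eval x * Real.exp (-x ^ 2) = 0)
    (m : ℕ) (q : Polynomial ℝ) (hq : q.degree ≤ (m : ℕ)) :
    ∫ x in Set.Ioo a b, q.eval x * (Q m).eval x * Real.exp (-x ^ 2)
      = q.coeff m * ∫ x in Set.Ioo a b, (Q m).eval x ^ 2 * Real.exp (-x ^ 2) := by
  set c := q.coeff m with hc
  set r := q - Polynomial.C c * Q m with hr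
  have hrdeg : r.degree < (m : ℕ) := by
    rw [Polynomial.degree_lt_iff_coeff_zero]
    intro j hj
    rcases eq_or_lt_of_le hj with hjm | hj'
    · have h1 : (Q m).coeff m = 1 := by
        have := (hmonic m).coeff_natDegree
        rwa [hdeg m] at this
      simp [hr, ← hjm, h1, hc]
    · have hj'' : m < j := by exact_mod_cast hj'
      have h1 : q.coeff j = 0 := Polynomial.coeff_eq_zero_of_degree_lt
        (lt_of_le_of_lt hq (by exact_mod_cast hj''))
      have h2 : (Q m).coeff j = 0 :=
        Polynomial.coeff_eq_zero_of_natDegree_lt (by rw [hdeg]; omega)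
      simp [hr, h1, h2]
  have hqeq : q = r + Polynomial.C c * Q m := by rw [hr]; ring
  have key : ∀ x : ℝ, q.eval x * (Q m).eval x * Real.exp (-x ^ 2)
      = (Q m).eval x * r.eval x * Real.exp (-x ^ 2)
        + c * ((Q m).eval x ^ 2 * Real.exp (-x ^ 2)) := by
    intro x; nth_rewrite 1 [hqeq]; simp; ring
  simp_rw [key]
  have int1 : IntegrableOn (fun x => (Q m).eval x * r.eval x * Real.exp (-x ^ 2))
      (Set.Ioo a b) volume :=
    (gpoly_integrableOn (Q m * r) a b).congr_fun (fun x _ => by simp) measurableSet_Ioo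
  have int2 : IntegrableOn (fun x => c * ((Q m).eval x ^ 2 * Real.exp (-x ^ 2)))
      (Set.Ioo a b) volume :=
    ((gpoly_integrableOn (Q m * Q m) a b).congr_fun (fun x _ => by simp [sq])
      measurableSet_Ioo).const_mul _
  rw [integral_add int1 int2, orth_lower a b Q hmonic hdeg horth m r hrdeg,
    integral_const_mul, zero_add]

private lemma coeff_sum_C_mul_X_pow (m : ℕ) (g : ℕ → ℝ) (j : ℕ) :
    (∑ i ∈ Finset.range m, Polynomial.C (g i) * Polynomial.X ^ i).coeff j
      = if j < m then g j else 0 := by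
  rw [Polynomial.finset_sum_coeff]
  simp_rw [Polynomial.coeff_C_mul, Polynomial.coeff_X_pow]
  rcases lt_or_ge j m with h | h
  · rw [Finset.sum_eq_single j]
    · simp [h]
    · intro i _ hij; simp [Ne.symm hij]
    · intro hj; exact absurd (Finset.mem_range.mpr h) hj
  · rw [if_neg (by omega), Finset.sum_eq_zero]
    intro i hi
    have : i ≠ j := by have := Finset.mem_range.mp hi; omega
    simp [Ne.symm this]

private lemma degree_sum_C_mul_X_pow_lt (m : ℕ) (g : ℕ → ℝ) :
    (∑ i ∈ Finset.range m, Polynomial.C (g i) * Polynomial.X ^ i).degree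
      < ((m : ℕ) : WithBot ℕ) := by
  rw [Polynomial.degree_lt_iff_coeff_zero]
  intro j hj
  have : ¬ j < m := by exact_mod_cast not_lt.mpr hj
  rw [coeff_sum_C_mul_X_pow, if_neg this]

/-- Core computation: the derivative of the subleading coefficient of a deformation of a
monic orthogonal family. -/
private lemma core (a b : ℝ) (n : ℕ) (hn : 1 ≤ n)
    (Q : ℕ → Polynomial ℝ)
    (hmonic : ∀ m, (Q m).Monic) (hdeg : ∀ m, (Q m).natDegree = m)
    (horth : ∀ i j, i ≠ j →
      ∫ x in Set.Ioo a b, (Q i).eval x * (Q j).eval x * Real.exp (-x ^ 2) = 0)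
    (hnm1 : ℝ)
    (hh : hnm1 = ∫ x in Set.Ioo a b, (Q (n - 1)).eval x ^ 2 * Real.exp (-x ^ 2))
    (R : ℝ → ℕ → Polynomial ℝ) (t0 : ℝ) (hR : ∀ m, R t0 m = Q m)
    (hRdeg : ∀ t m, (R t m).natDegree = m) (hRmonic : ∀ t m, (R t m).Monic)
    (hRsmooth : ∀ m k, Differentiable ℝ fun t => (R t m).coeff k)
    (M : ℕ → ℝ → ℝ) (v : ℕ → ℝ)
    (hM : ∀ k, M k t0 = ∫ x in Set.Ioo a b, x ^ k * Real.exp (-x ^ 2))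
    (hMderiv : ∀ k, HasDerivAt (M k) (v k) t0)
    (hG : ∀ t, ∑ k ∈ Finset.range (2 * n), ((R t n) * (R t (n - 1))).coeff k * M k t = 0) :
    deriv (fun t => (R t n).coeff (n - 1)) t0 * hnm1
      + ∑ k ∈ Finset.range (2 * n), (Q n * Q (n - 1)).coeff k * v k = 0 := by
  classical
  -- derivative polynomials
  set Dn : Polynomial ℝ := ∑ i ∈ Finset.range n,
    Polynomial.C (deriv (fun t => (R t n).coeff i) t0) * Polynomial.X ^ i with hDn_def
  set Dm : Polynomial ℝ := ∑ i ∈ Finset.range (n - 1),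
    Polynomial.C (deriv (fun t => (R t (n - 1)).coeff i) t0) * Polynomial.X ^ i with hDm_def
  have hconst : ∀ (m i : ℕ), m ≤ i → deriv (fun t => (R t m).coeff i) t0 = 0 := by
    intro m i hmi
    rcases eq_or_lt_of_le hmi with rfl | hlt
    · have : (fun t => (R t m).coeff m) = fun _ => (1 : ℝ) := by
        funext t
        have := (hRmonic t m).coeff_natDegree
        rwa [hRdeg t m] at this
      rw [this, deriv_const]
    · have : (fun t => (R t m).coeff i) = fun _ => (0 : ℝ) := by
        funext t
        exact Polynomial.coeff_eq_zero_of_natDegree_lt (by rw [hRdeg]; omega)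
      rw [this, deriv_const]
  have hDn : ∀ i, Dn.coeff i = deriv (fun t => (R t n).coeff i) t0 := by
    intro i
    rw [hDn_def, coeff_sum_C_mul_X_pow]
    rcases lt_or_ge i n with h | h
    · rw [if_pos h]
    · rw [if_neg (by omega), hconst n i h]
  have hDm : ∀ i, Dm.coeff i = deriv (fun t => (R t (n - 1)).coeff i) t0 := by
    intro i
    rw [hDm_def, coeff_sum_C_mul_X_pow]
    rcases lt_or_ge i (n - 1) with h | h
    · rw [if_pos h]
    · rw [if_neg (by omega), hconst (n - 1) i h]
  -- derivative of the coefficients of the product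
  have hck : ∀ k, HasDerivAt (fun t => ((R t n) * (R t (n - 1))).coeff k)
      ((Dn * Q (n - 1) + Q n * Dm).coeff k) t0 := by
    intro k
    have h1 : ∀ t, ((R t n) * (R t (n - 1))).coeff k
        = ∑ p ∈ Finset.HasAntidiagonal.antidiagonal k, (R t n).coeff p.1 * (R t (n - 1)).coeff p.2 := by
      intro t; rw [Polynomial.coeff_mul]
    simp_rw [h1]
    have h2 : (Dn * Q (n - 1) + Q n * Dm).coeff k
        = ∑ p ∈ Finset.HasAntidiagonal.antidiagonal k,
            (Dn.coeff p.1 * (Q (n - 1)).coeff p.2 + (Q n).coeff p.1 * Dm.coeff p.2) := by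
      rw [Polynomial.coeff_add, Polynomial.coeff_mul, Polynomial.coeff_mul,
        ← Finset.sum_add_distrib]
    rw [h2]
    apply HasDerivAt.fun_sum
    intro p _
    have hf : HasDerivAt (fun t => (R t n).coeff p.1)
        (deriv (fun t => (R t n).coeff p.1) t0) t0 :=
      ((hRsmooth n p.1) t0).hasDerivAt
    have hg : HasDerivAt (fun t => (R t (n - 1)).coeff p.2)
        (deriv (fun t => (R t (n - 1)).coeff p.2) t0) t0 :=
      ((hRsmooth (n - 1) p.2) t0).hasDerivAt
    have := hf.fun_mul hg
    rw [hR n, hR (n - 1)] at this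
    exact this.congr_deriv (by rw [hDn, hDm])
  -- the global sum has derivative 0
  have hsum : HasDerivAt
      (fun t => ∑ k ∈ Finset.range (2 * n), ((R t n) * (R t (n - 1))).coeff k * M k t)
      (∑ k ∈ Finset.range (2 * n),
        ((Dn * Q (n - 1) + Q n * Dm).coeff k * M k t0
          + (Q n * Q (n - 1)).coeff k * v k)) t0 := by
    apply HasDerivAt.fun_sum
    intro k _
    have := (hck k).fun_mul (hMderiv k)
    simpa [hR] using this
  have hzero : HasDerivAt
      (fun t => ∑ k ∈ Finset.range (2 * n), ((R t n) * (R t (n - 1))).coeff k * M k t)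
      0 t0 := by
    have : (fun t => ∑ k ∈ Finset.range (2 * n), ((R t n) * (R t (n - 1))).coeff k * M k t)
        = fun _ => (0 : ℝ) := funext hG
    rw [this]; exact hasDerivAt_const t0 0
  have hS : (∑ k ∈ Finset.range (2 * n),
      ((Dn * Q (n - 1) + Q n * Dm).coeff k * M k t0
        + (Q n * Q (n - 1)).coeff k * v k)) = 0 := hsum.unique hzero
  rw [Finset.sum_add_distrib] at hS
  -- first sum equals d * hnm1
  have hDn_deg : Dn.degree < (n : ℕ) := degree_sum_C_mul_X_pow_lt n _
  have hDm_deg : Dm.degree < ((n - 1 : ℕ) : WithBot ℕ) := degree_sum_C_mul_X_pow_lt (n - 1) _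
  have hDn_nat : Dn.natDegree ≤ n := Polynomial.natDegree_le_iff_degree_le.mpr hDn_deg.le
  have hDm_nat : Dm.natDegree ≤ n - 1 := Polynomial.natDegree_le_iff_degree_le.mpr hDm_deg.le
  have hprod_nat : (Dn * Q (n - 1) + Q n * Dm).natDegree < 2 * n := by
    apply lt_of_le_of_lt (Polynomial.natDegree_add_le _ _)
    have h1 := Polynomial.natDegree_mul_le (p := Dn) (q := Q (n - 1))
    have h2 := Polynomial.natDegree_mul_le (p := Q n) (q := Dm)
    rw [hdeg] at h1; rw [hdeg] at h2
    omega
  have hfirst : ∑ k ∈ Finset.range (2 * n), (Dn * Q (n - 1) + Q n * Dm).coeff k * M k t0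
      = deriv (fun t => (R t n).coeff (n - 1)) t0 * hnm1 := by
    have : ∑ k ∈ Finset.range (2 * n), (Dn * Q (n - 1) + Q n * Dm).coeff k * M k t0
        = ∫ x in Set.Ioo a b, (Dn * Q (n - 1) + Q n * Dm).eval x * Real.exp (-x ^ 2) := by
      rw [integral_poly_mul_exp _ a b (2 * n) hprod_nat]
      exact Finset.sum_congr rfl fun k _ => by rw [hM]
    rw [this]
    have hsplit : ∀ x : ℝ, (Dn * Q (n - 1) + Q n * Dm).eval x * Real.exp (-x ^ 2)
        = Dn.eval x * (Q (n - 1)).eval x * Real.exp (-x ^ 2)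
          + (Q n).eval x * Dm.eval x * Real.exp (-x ^ 2) := by
      intro x; simp; ring
    simp_rw [hsplit]
    have int1 : IntegrableOn (fun x => Dn.eval x * (Q (n - 1)).eval x * Real.exp (-x ^ 2))
        (Set.Ioo a b) volume :=
      (gpoly_integrableOn (Dn * Q (n - 1)) a b).congr_fun (fun x _ => by simp)
        measurableSet_Ioo
    have int2 : IntegrableOn (fun x => (Q n).eval x * Dm.eval x * Real.exp (-x ^ 2))
        (Set.Ioo a b) volume :=
      (gpoly_integrableOn (Q n * Dm) a b).congr_fun (fun x _ => by simp) measurableSet_Ioo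
    rw [integral_add int1 int2]
    have e1 : ∫ x in Set.Ioo a b, Dn.eval x * (Q (n - 1)).eval x * Real.exp (-x ^ 2)
        = Dn.coeff (n - 1) * ∫ x in Set.Ioo a b, (Q (n - 1)).eval x ^ 2 * Real.exp (-x ^ 2) := by
      apply orth_proj a b Q hmonic hdeg horth (n - 1) Dn
      rw [Polynomial.degree_le_iff_coeff_zero]
      intro j hj
      have hj' : (n - 1) < j := by exact_mod_cast hj
      rw [hDn_def, coeff_sum_C_mul_X_pow, if_neg (by omega)]
    have e2 : ∫ x in Set.Ioo a b, (Q n).eval x * Dm.eval x * Real.exp (-x ^ 2) = 0 := by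
      apply orth_lower a b Q hmonic hdeg horth n Dm
      calc Dm.degree < ((n - 1 : ℕ) : WithBot ℕ) := hDm_deg
        _ ≤ ((n : ℕ) : WithBot ℕ) := by exact_mod_cast Nat.sub_le n 1
    rw [e1, e2, add_zero, ← hh, hDn]
  rw [hfirst] at hS
  linarith [hS]

private lemma cont_mono (k : ℕ) : Continuous fun x : ℝ => x ^ k * Real.exp (-x ^ 2) :=
  (continuous_pow k).mul (Real.continuous_exp.comp (continuous_pow 2).neg)

private lemma hasDerivAt_moment_right (a b : ℝ) (hab : a < b) (f : ℝ → ℝ)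
    (hf : Continuous f) :
    HasDerivAt (fun t => ∫ x in Set.Ioo a t, f x) (f b) b := by
  have h1 : HasDerivAt (fun t => ∫ x in a..t, f x) (f b) b :=
    intervalIntegral.integral_hasDerivAt_right (hf.intervalIntegrable a b)
      hf.stronglyMeasurable.stronglyMeasurableAtFilter hf.continuousAt
  apply h1.congr_of_eventuallyEq
  filter_upwards [eventually_gt_nhds hab] with t ht
  rw [intervalIntegral.integral_of_le ht.le, integral_Ioc_eq_integral_Ioo]

private lemma hasDerivAt_moment_left (a b : ℝ) (hab : a < b) (f : ℝ → ℝ)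
    (hf : Continuous f) :
    HasDerivAt (fun s => ∫ x in Set.Ioo s b, f x) (-f a) a := by
  have h1 : HasDerivAt (fun s => ∫ x in s..b, f x) (-f a) a :=
    intervalIntegral.integral_hasDerivAt_left (hf.intervalIntegrable a b)
      hf.stronglyMeasurable.stronglyMeasurableAtFilter hf.continuousAt
  apply h1.congr_of_eventuallyEq
  filter_upwards [eventually_lt_nhds hab] with s hs
  rw [intervalIntegral.integral_of_le hs.le, integral_Ioc_eq_integral_Ioo]

/-- For monic polynomials orthogonal with respect to e^{-x²} on (a,b), the
subleading coefficient p₁(n,a,b) satisfies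
∂_b p₁(n,a,b) = −e^{-b²} P_n(b) P_{n-1}(b)/h_{n-1} and
∂_a p₁(n,a,b) = e^{-a²} P_n(a) P_{n-1}(a)/h_{n-1}. -/
theorem deriv_p1_gaussian
    (n : ℕ) (hn : 1 ≤ n) (P : ℕ → ℝ → ℝ → Polynomial ℝ)
    (hmonic : ∀ m a b, (P m a b).Monic) (hdeg : ∀ m a b, (P m a b).natDegree = m)
    (horth : ∀ i j a b, a < b → i ≠ j →
      ∫ x in Set.Ioo a b,
        (P i a b).eval x * (P j a b).eval x * Real.exp (-x ^ 2) = 0)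
    (hsmootha : ∀ m k b, Differentiable ℝ fun a => (P m a b).coeff k)
    (hsmoothb : ∀ m k a, Differentiable ℝ fun b => (P m a b).coeff k)
    (a b : ℝ) (hab : a < b)
    (hnm1 : ℝ)
    (hhnm1 : hnm1 =
      ∫ x in Set.Ioo a b, (P (n - 1) a b).eval x ^ 2 * Real.exp (-x ^ 2))
    (hpos : 0 < hnm1) :
    HasDerivAt (fun t => (P n a t).coeff (n - 1))
        (-(Real.exp (-b ^ 2) * (P n a b).eval b * (P (n - 1) a b).eval b) / hnm1)
        b ∧
      HasDerivAt (fun s => (P n s b).coeff (n - 1))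
        (Real.exp (-a ^ 2) * (P n a b).eval a * (P (n - 1) a b).eval a / hnm1)
        a := by
  have hne : hnm1 ≠ 0 := ne_of_gt hpos
  have hnd : ∀ s t : ℝ, ((P n s t) * (P (n - 1) s t)).natDegree < 2 * n := by
    intro s t
    have := Polynomial.natDegree_mul_le (p := P n s t) (q := P (n - 1) s t)
    rw [hdeg, hdeg] at this; omega
  constructor
  · -- derivative in the right endpoint
    have hG : ∀ t, ∑ k ∈ Finset.range (2 * n),
        ((P n a t) * (P (n - 1) a t)).coeff k
          * ∫ x in Set.Ioo a t, x ^ k * Real.exp (-x ^ 2) = 0 := by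
      intro t
      rw [← integral_poly_mul_exp _ a t (2 * n) (hnd a t)]
      rcases le_or_gt t a with h | h
      · rw [Set.Ioo_eq_empty (not_lt.mpr h), setIntegral_empty]
      · have h0 := horth n (n - 1) a t h (by omega)
        simp_rw [Polynomial.eval_mul]
        exact h0
    have hcore := core a b n hn (fun m => P m a b) (fun m => hmonic m a b)
      (fun m => hdeg m a b) (fun i j hij => horth i j a b hab hij) hnm1 hhnm1
      (fun t m => P m a t) b (fun m => rfl) (fun t m => hdeg m a t)
      (fun t m => hmonic m a t) (fun m k => hsmoothb m k a)
      (fun k t => ∫ x in Set.Ioo a t, x ^ k * Real.exp (-x ^ 2))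
      (fun k => b ^ k * Real.exp (-b ^ 2))
      (fun k => rfl)
      (fun k => hasDerivAt_moment_right a b hab _ (cont_mono k))
      hG
    have hsum : ∑ k ∈ Finset.range (2 * n),
        ((P n a b) * (P (n - 1) a b)).coeff k * (b ^ k * Real.exp (-b ^ 2))
        = (P n a b).eval b * (P (n - 1) a b).eval b * Real.exp (-b ^ 2) := by
      rw [← Polynomial.eval_mul, Polynomial.eval_eq_sum_range' (hnd a b) b, Finset.sum_mul]
      exact Finset.sum_congr rfl fun k _ => by ring
    rw [hsum] at hcore
    have hd : HasDerivAt (fun t => (P n a t).coeff (n - 1))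
        (deriv (fun t => (P n a t).coeff (n - 1)) b) b :=
      ((hsmoothb n (n - 1) a) b).hasDerivAt
    have hval : deriv (fun t => (P n a t).coeff (n - 1)) b
        = -(Real.exp (-b ^ 2) * (P n a b).eval b * (P (n - 1) a b).eval b) / hnm1 := by
      rw [eq_div_iff hne]
      linear_combination hcore
    rw [← hval]
    exact hd
  · -- derivative in the left endpoint
    have hG : ∀ s, ∑ k ∈ Finset.range (2 * n),
        ((P n s b) * (P (n - 1) s b)).coeff k
          * ∫ x in Set.Ioo s b, x ^ k * Real.exp (-x ^ 2) = 0 := by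
      intro s
      rw [← integral_poly_mul_exp _ s b (2 * n) (hnd s b)]
      rcases le_or_gt b s with h | h
      · rw [Set.Ioo_eq_empty (not_lt.mpr h), setIntegral_empty]
      · have h0 := horth n (n - 1) s b h (by omega)
        simp_rw [Polynomial.eval_mul]
        exact h0
    have hcore := core a b n hn (fun m => P m a b) (fun m => hmonic m a b)
      (fun m => hdeg m a b) (fun i j hij => horth i j a b hab hij) hnm1 hhnm1
      (fun s m => P m s b) a (fun m => rfl) (fun s m => hdeg m s b)
      (fun s m => hmonic m s b) (fun m k => hsmootha m k b)
      (fun k s => ∫ x in Set.Ioo s b, x ^ k * Real.exp (-x ^ 2))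
      (fun k => -(a ^ k * Real.exp (-a ^ 2)))
      (fun k => rfl)
      (fun k => hasDerivAt_moment_left a b hab _ (cont_mono k))
      hG
    have hsum : ∑ k ∈ Finset.range (2 * n),
        ((P n a b) * (P (n - 1) a b)).coeff k * (-(a ^ k * Real.exp (-a ^ 2)))
        = -((P n a b).eval a * (P (n - 1) a b).eval a * Real.exp (-a ^ 2)) := by
      rw [← Polynomial.eval_mul, Polynomial.eval_eq_sum_range' (hnd a b) a, Finset.sum_mul,
        ← Finset.sum_neg_distrib]
      exact Finset.sum_congr rfl fun k _ => by ring
    rw [hsum] at hcore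
    have hd : HasDerivAt (fun s => (P n s b).coeff (n - 1))
        (deriv (fun s => (P n s b).coeff (n - 1)) a) a :=
      ((hsmootha n (n - 1) b) a).hasDerivAt
    have hval : deriv (fun s => (P n s b).coeff (n - 1)) a
        = Real.exp (-a ^ 2) * (P n a b).eval a * (P (n - 1) a b).eval a / hnm1 := by
      rw [eq_div_iff hne]
      linear_combination hcore
    rw [← hval]
    exact hd
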